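/- arXiv:1708.07392 — 2 statements merged into one kernel-verified Lean document; each statement's English description precedes it below -/
import Mathlib

section
/- Let Ω ⊂ ℝ^N (N ≥ 2) be a bounded domain such that every point of Γ is regular for the Dirichlet problem, and let u ∈ C⁰(Ω̄) ∩ C²(Ω) be the solution of Δu = N in Ω with u = 0 on Γ. Then −u(x) ≥ (1/2)·δ_Γ(x)² for every x ∈ Ω̄. -/
open MeasureTheory Metric Set Bornology
open scoped RealInnerProductSpace NNReal ENNReal

noncomputable section

/-- The Laplacian of `u` at `x`, computed in the standard orthonormal basis. -/
def lap {N : ℕ} (u : EuclideanSpace ℝ (Fin N) → ℝ) (x : EuclideanSpace ℝ (Fin N)) : ℝ :=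
  ∑ i : Fin N,
    fderiv ℝ (fun y => fderiv ℝ u y (EuclideanSpace.single i 1)) x (EuclideanSpace.single i 1)

/-- The squared Frobenius norm `|∇²u|²` of the Hessian of `u` at `x`. -/
def hessSq {N : ℕ} (u : EuclideanSpace ℝ (Fin N) → ℝ) (x : EuclideanSpace ℝ (Fin N)) : ℝ :=
  ∑ i : Fin N, ∑ j : Fin N,
    (fderiv ℝ (fun y => fderiv ℝ u y (EuclideanSpace.single j 1)) x
      (EuclideanSpace.single i 1)) ^ 2

/-- The divergence of a vector field `w`. -/
def vdiv {N : ℕ} (w : EuclideanSpace ℝ (Fin N) → EuclideanSpace ℝ (Fin N))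
    (x : EuclideanSpace ℝ (Fin N)) : ℝ :=
  ∑ i : Fin N, fderiv ℝ (fun y => w y i) x (EuclideanSpace.single i 1)

/-- The surface measure: the `(N-1)`-dimensional Hausdorff measure. -/
def surf (N : ℕ) : Measure (EuclideanSpace ℝ (Fin N)) := μH[(N : ℝ) - 1]

/-- `u` solves the torsion problem `Δu = N` in `Ω`, `u = 0` on `Γ = ∂Ω`. -/
def torsion {N : ℕ} (Ω : Set (EuclideanSpace ℝ (Fin N))) (u : EuclideanSpace ℝ (Fin N) → ℝ) :
    Prop :=
  ContDiffOn ℝ 2 u Ω ∧ (∀ x ∈ Ω, lap u x = (N : ℝ)) ∧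
    ContinuousOn u (closure Ω) ∧ ∀ x ∈ frontier Ω, u x = 0

/-- The quadratic polynomial `q(x) = (|x-z|² - a)/2`. -/
def qf {N : ℕ} (z : EuclideanSpace ℝ (Fin N)) (a : ℝ) (x : EuclideanSpace ℝ (Fin N)) : ℝ :=
  (‖x - z‖ ^ 2 - a) / 2

/-- The reference constant `R = N|Ω|/|Γ|`. -/
def RΩ {N : ℕ} (Ω : Set (EuclideanSpace ℝ (Fin N))) : ℝ :=
  N * (volume Ω).toReal / ((surf N) (frontier Ω)).toReal

/-- The reference constant `H₀ = |Γ|/(N|Ω|)`. -/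
def H0 {N : ℕ} (Ω : Set (EuclideanSpace ℝ (Fin N))) : ℝ :=
  ((surf N) (frontier Ω)).toReal / (N * (volume Ω).toReal)

/-- `Ω` has boundary of class `C²`, with outward unit normal field `ν`: near every boundary
point, `Ω` is the sublevel set of a `C²` defining function with nonvanishing gradient, and `ν`
is the normalized gradient of the defining function. -/
def C2Boundary {N : ℕ} (Ω : Set (EuclideanSpace ℝ (Fin N)))
    (ν : EuclideanSpace ℝ (Fin N) → EuclideanSpace ℝ (Fin N)) : Prop :=
  ∀ x ∈ frontier Ω, ∃ (U : Set (EuclideanSpace ℝ (Fin N))) (f : EuclideanSpace ℝ (Fin N) → ℝ),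
    IsOpen U ∧ x ∈ U ∧ ContDiffOn ℝ 2 f U ∧
    (∀ y ∈ U, (y ∈ Ω ↔ f y < 0)) ∧
    ∀ y ∈ U ∩ frontier Ω, gradient f y ≠ 0 ∧ ν y = ‖gradient f y‖⁻¹ • gradient f y

/-- `Ω` has boundary of class `C^{1,α}`, with outward unit normal field `ν`. -/
def C1αBoundary {N : ℕ} (Ω : Set (EuclideanSpace ℝ (Fin N))) (α : ℝ)
    (ν : EuclideanSpace ℝ (Fin N) → EuclideanSpace ℝ (Fin N)) : Prop :=
  ∀ x ∈ frontier Ω, ∃ (U : Set (EuclideanSpace ℝ (Fin N))) (f : EuclideanSpace ℝ (Fin N) → ℝ)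
    (C : ℝ≥0),
    IsOpen U ∧ x ∈ U ∧ ContDiffOn ℝ 1 f U ∧
    HolderOnWith C α.toNNReal (fun y => gradient f y) U ∧
    (∀ y ∈ U, (y ∈ Ω ↔ f y < 0)) ∧
    ∀ y ∈ U ∩ frontier Ω, gradient f y ≠ 0 ∧ ν y = ‖gradient f y‖⁻¹ • gradient f y

/-- `Ω` has boundary of class `C^{0,α}`: near every boundary point, after choosing a direction
`e`, `Ω` is the subgraph of an `α`-Hölder continuous function on the hyperplane orthogonal
to `e`. -/
def HolderBoundary {N : ℕ} (Ω : Set (EuclideanSpace ℝ (Fin N))) (α : ℝ) : Prop :=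
  ∀ x ∈ frontier Ω, ∃ (e : EuclideanSpace ℝ (Fin N)) (r : ℝ)
    (φ : EuclideanSpace ℝ (Fin N) → ℝ) (C : ℝ≥0),
    ‖e‖ = 1 ∧ 0 < r ∧ HolderOnWith C α.toNNReal φ univ ∧
    ∀ y ∈ ball x r, (y ∈ Ω ↔ (inner ℝ y e : ℝ) < φ (y - (inner ℝ y e : ℝ) • e))

/-- `H` is the mean curvature of `∂Ω` (with respect to the inward normal, so that `H = 1/ρ`
for a ball of radius `ρ`): it is given by `div(∇f/|∇f|)/(N-1)` for a local `C²` defining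
function `f` of `Ω`. -/
def meanCurv {N : ℕ} (Ω : Set (EuclideanSpace ℝ (Fin N)))
    (H : EuclideanSpace ℝ (Fin N) → ℝ) : Prop :=
  ∀ x ∈ frontier Ω, ∃ (U : Set (EuclideanSpace ℝ (Fin N))) (f : EuclideanSpace ℝ (Fin N) → ℝ),
    IsOpen U ∧ x ∈ U ∧ ContDiffOn ℝ 2 f U ∧
    (∀ y ∈ U, (y ∈ Ω ↔ f y < 0)) ∧
    (∀ y ∈ U ∩ frontier Ω, gradient f y ≠ 0) ∧
    H x = ((N : ℝ) - 1)⁻¹ * vdiv (fun y => ‖gradient f y‖⁻¹ • gradient f y) x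

/-- `Ω` satisfies the uniform interior sphere condition with radius `r`. -/
def IntSphere {N : ℕ} (Ω : Set (EuclideanSpace ℝ (Fin N))) (r : ℝ) : Prop :=
  0 < r ∧ ∀ p ∈ frontier Ω, ∃ c, ball c r ⊆ Ω ∧ closedBall c r ∩ frontier Ω = {p}

/-- `Ω` satisfies the uniform exterior sphere condition with radius `r`. -/
def ExtSphere {N : ℕ} (Ω : Set (EuclideanSpace ℝ (Fin N))) (r : ℝ) : Prop :=
  0 < r ∧ ∀ p ∈ frontier Ω, ∃ c, ball c r ⊆ (closure Ω)ᶜ ∧ closedBall c r ∩ frontier Ω = {p}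

/-- `v` is harmonic in `Ω`. -/
def HarmOn {N : ℕ} (Ω : Set (EuclideanSpace ℝ (Fin N))) (v : EuclideanSpace ℝ (Fin N) → ℝ) :
    Prop :=
  ContDiffOn ℝ 2 v Ω ∧ ∀ x ∈ Ω, lap v x = 0

/-- The best constant `μ_α(Ω)` (with base point `x₀`) in the Hardy–Poincaré inequality
`∫_Ω v² ≤ μ_α(Ω)⁻¹ ∫_Ω |∇v|² δ_Γ^{2α}` over `W^{1,2}` functions harmonic in `Ω`
vanishing at `x₀`. -/
def muHP {N : ℕ} (Ω : Set (EuclideanSpace ℝ (Fin N))) (x₀ : EuclideanSpace ℝ (Fin N))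
    (α : ℝ) : ℝ :=
  sInf { r | ∃ v : EuclideanSpace ℝ (Fin N) → ℝ, HarmOn Ω v ∧ v x₀ = 0 ∧
    IntegrableOn (fun x => (v x) ^ 2) Ω ∧
    IntegrableOn (fun x => ‖gradient v x‖ ^ 2 * infDist x (frontier Ω) ^ (2 * α)) Ω ∧
    (∫ x in Ω, (v x) ^ 2) = 1 ∧
    r = ∫ x in Ω, ‖gradient v x‖ ^ 2 * infDist x (frontier Ω) ^ (2 * α) }

/-- The best constant `μ̄(Ω)` in the Poincaré inequality `∫_Ω v² ≤ μ̄(Ω)⁻¹ ∫_Ω |∇v|²` over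
`W^{1,2}` functions harmonic in `Ω` with zero mean on `Ω`. -/
def muBar {N : ℕ} (Ω : Set (EuclideanSpace ℝ (Fin N))) : ℝ :=
  sInf { r | ∃ v : EuclideanSpace ℝ (Fin N) → ℝ, HarmOn Ω v ∧ (∫ x in Ω, v x) = 0 ∧
    IntegrableOn (fun x => (v x) ^ 2) Ω ∧
    IntegrableOn (fun x => ‖gradient v x‖ ^ 2) Ω ∧
    (∫ x in Ω, (v x) ^ 2) = 1 ∧
    r = ∫ x in Ω, ‖gradient v x‖ ^ 2 }

/-- `M = max_{Ω̄} |∇u|`. -/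
def Mgrad {N : ℕ} (Ω : Set (EuclideanSpace ℝ (Fin N))) (u : EuclideanSpace ℝ (Fin N) → ℝ) :
    ℝ :=
  ⨆ x ∈ closure Ω, ‖gradient u x‖

/-- `ρ_i = min_{x ∈ Γ} |x - z|`. -/
def rhoi {N : ℕ} (Ω : Set (EuclideanSpace ℝ (Fin N))) (z : EuclideanSpace ℝ (Fin N)) : ℝ :=
  infDist z (frontier Ω)

/-- `ρ_e = max_{x ∈ Γ} |x - z|`. -/
def rhoe {N : ℕ} (Ω : Set (EuclideanSpace ℝ (Fin N))) (z : EuclideanSpace ℝ (Fin N)) : ℝ :=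
  ⨆ x ∈ frontier Ω, dist x z

/-- The (Fraenkel-type) asymmetry `A(Ω) = inf_x |Ω Δ B_R(x)| / |B_R(x)|`. -/
def asym {N : ℕ} (Ω : Set (EuclideanSpace ℝ (Fin N))) : ℝ :=
  sInf { m | ∃ x : EuclideanSpace ℝ (Fin N),
    m = (volume (symmDiff Ω (ball x (RΩ Ω)))).toReal / (volume (ball x (RΩ Ω))).toReal }

open Filter Topology

section torsionAux

private lemma aux_eps {a b K : ℝ} (hK : 0 ≤ K) (h : ∀ ε : ℝ, 0 < ε → a ≤ b + ε * K) :
    a ≤ b := by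
  by_contra hc
  push_neg at hc
  have h2 : 0 < 2 * K + 1 := by positivity
  have h1 := h ((a - b) / (2 * K + 1)) (div_pos (by linarith) h2)
  rw [div_mul_eq_mul_div, ← sub_le_iff_le_add', le_div_iff₀ h2] at h1
  nlinarith

private lemma second_deriv_nonpos_at_localMax {g g' : ℝ → ℝ} {L : ℝ}
    (h1 : ∀ᶠ t in 𝓝 (0:ℝ), HasDerivAt g (g' t) t)
    (h2 : HasDerivAt g' L 0) (hmax : IsLocalMax g 0) : L ≤ 0 := by
  by_contra hL
  push_neg at hL
  have hg'0 : g' 0 = 0 := by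
    have hd := h1.self_of_nhds
    have h := hmax.deriv_eq_zero
    rwa [hd.deriv] at h
  have hslope : Tendsto (fun t => g' t / t) (𝓝[≠] (0:ℝ)) (𝓝 L) := by
    have h := hasDerivAt_iff_tendsto_slope.mp h2
    have heq : slope g' 0 = fun t => g' t / t := by
      funext t; rw [slope_def_field, hg'0]; simp
    rwa [heq] at h
  have hpos : ∀ᶠ t in 𝓝[>] (0:ℝ), 0 < g' t := by
    have hhalf : ∀ᶠ t in 𝓝[≠] (0:ℝ), L / 2 < g' t / t :=
      hslope.eventually (eventually_gt_nhds (by linarith))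
    have hle : 𝓝[>] (0:ℝ) ≤ 𝓝[≠] (0:ℝ) := nhdsWithin_mono _ (fun t ht => ne_of_gt ht)
    filter_upwards [hhalf.filter_mono hle, self_mem_nhdsWithin] with t ht ht0
    have ht0' : (0:ℝ) < t := ht0
    have hq : 0 < g' t / t := lt_trans (by linarith) ht
    have := mul_pos hq ht0'
    rwa [div_mul_cancel₀ _ (ne_of_gt ht0')] at this
  rcases Metric.eventually_nhds_iff.mp h1 with ⟨δ₁, hδ₁, hd⟩
  rcases Metric.eventually_nhds_iff.mp hmax with ⟨δ₃, hδ₃, hm⟩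
  rcases mem_nhdsGT_iff_exists_Ioo_subset.mp hpos with ⟨δ₂, hδ₂, hp⟩
  have hδ₂' : (0:ℝ) < δ₂ := hδ₂
  have hm0 : 0 < min (min δ₁ δ₂) δ₃ := lt_min (lt_min hδ₁ hδ₂') hδ₃
  set t := min (min δ₁ δ₂) δ₃ / 2 with htdef
  have ht0 : 0 < t := by positivity
  have htm : t < min (min δ₁ δ₂) δ₃ := by
    rw [htdef]; linarith
  have ht1 : t < δ₁ := lt_of_lt_of_le htm (le_trans (min_le_left _ _) (min_le_left _ _))
  have ht2 : t < δ₂ := lt_of_lt_of_le htm (le_trans (min_le_left _ _) (min_le_right _ _))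
  have ht3 : t < δ₃ := lt_of_lt_of_le htm (min_le_right _ _)
  have hmono : StrictMonoOn g (Icc 0 t) := by
    apply strictMonoOn_of_deriv_pos (convex_Icc 0 t)
    · intro s hs
      have habs : dist s 0 < δ₁ := by
        rw [Real.dist_eq, sub_zero, abs_of_nonneg hs.1]
        exact lt_of_le_of_lt hs.2 ht1
      exact (hd habs).continuousAt.continuousWithinAt
    · intro s hs
      rw [interior_Icc] at hs
      have hds : HasDerivAt g (g' s) s := hd (by
        rw [Real.dist_eq, sub_zero, abs_of_pos hs.1]; exact lt_trans hs.2 ht1)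
      rw [hds.deriv]
      exact hp ⟨hs.1, lt_trans hs.2 ht2⟩
  have hlt : g 0 < g t := hmono (left_mem_Icc.mpr ht0.le) (right_mem_Icc.mpr ht0.le) ht0
  have hle2 : g t ≤ g 0 := hm (by rw [Real.dist_eq, sub_zero, abs_of_pos ht0]; exact ht3)
  linarith


private lemma secondDirNonpos {N : ℕ} {B : Set (EuclideanSpace ℝ (Fin N))}
    {v : EuclideanSpace ℝ (Fin N) → ℝ} {x e : EuclideanSpace ℝ (Fin N)}
    (hB : IsOpen B) (hx : x ∈ B)
    (hv : ∀ y ∈ B, DifferentiableAt ℝ v y)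
    (hF : DifferentiableAt ℝ (fun y => fderiv ℝ v y e) x)
    (hmax : IsLocalMax v x) :
    fderiv ℝ (fun y => fderiv ℝ v y e) x e ≤ 0 := by
  have hline : ∀ t : ℝ, HasDerivAt (fun s : ℝ => x + s • e) e t := by
    intro t
    simpa using ((hasDerivAt_id t).smul_const e).const_add x
  have hcontf : Continuous (fun s : ℝ => x + s • e) := by fun_prop
  have hcont : Tendsto (fun t : ℝ => x + t • e) (𝓝 0) (𝓝 x) := by
    simpa using hcontf.tendsto 0
  have hmem : ∀ᶠ t in 𝓝 (0:ℝ), x + t • e ∈ B := hcont.eventually (hB.mem_nhds hx)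
  have h1 : ∀ᶠ t in 𝓝 (0:ℝ), HasDerivAt (fun s : ℝ => v (x + s • e))
      (fderiv ℝ v (x + t • e) e) t := by
    filter_upwards [hmem] with t ht
    exact ((hv _ ht).hasFDerivAt).comp_hasDerivAt t (hline t)
  have h0' : x + (0:ℝ) • e = x := by simp
  have h2 : HasDerivAt (fun t : ℝ => fderiv ℝ v (x + t • e) e)
      (fderiv ℝ (fun y => fderiv ℝ v y e) x e) 0 := by
    have hF' : HasFDerivAt (fun y => fderiv ℝ v y e)
        (fderiv ℝ (fun y => fderiv ℝ v y e) x) (x + (0:ℝ) • e) := by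
      rw [h0']; exact hF.hasFDerivAt
    exact hF'.comp_hasDerivAt 0 (hline 0)
  have hgmax : IsLocalMax (fun t : ℝ => v (x + t • e)) 0 := by
    have hev := hcont.eventually hmax
    have heq : v (x + (0:ℝ) • e) = v x := by rw [h0']
    exact hev.mono (fun t ht => by
      show v (x + t • e) ≤ v (x + (0:ℝ) • e)
      rw [heq]; exact ht)
  exact second_deriv_nonpos_at_localMax h1 h2 hgmax

private lemma maxprin {N : ℕ} {B : Set (EuclideanSpace ℝ (Fin N))}
    {v : EuclideanSpace ℝ (Fin N) → ℝ}
    (hB : IsOpen B) (hBb : IsBounded B) (hne : B.Nonempty)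
    (hcont : ContinuousOn v (closure B))
    (hdiff : ∀ y ∈ B, DifferentiableAt ℝ v y)
    (hdiff2 : ∀ y ∈ B, ∀ i : Fin N, DifferentiableAt ℝ
      (fun w => fderiv ℝ v w (EuclideanSpace.single i (1:ℝ))) y)
    (hlap : ∀ y ∈ B, 0 < lap v y)
    (hbd : ∀ y ∈ frontier B, v y ≤ 0) :
    ∀ x ∈ closure B, v x ≤ 0 := by
  obtain ⟨x₀, hx₀, hmax⟩ := hBb.isCompact_closure.exists_isMaxOn hne.closure hcont
  have hx0 : v x₀ ≤ 0 := by
    by_cases hxB : x₀ ∈ B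
    · exfalso
      have hloc : IsLocalMax v x₀ :=
        hmax.isLocalMax (Filter.mem_of_superset (hB.mem_nhds hxB) subset_closure)
      have hle : lap v x₀ ≤ 0 := Finset.sum_nonpos fun i _ =>
        secondDirNonpos hB hxB hdiff (hdiff2 x₀ hxB i) hloc
      exact absurd (hlap x₀ hxB) (not_lt.mpr hle)
    · exact hbd x₀ (by rw [frontier, hB.interior_eq]; exact ⟨hx₀, hxB⟩)
  exact fun x hx => le_trans (hmax hx) hx0


private lemma quadH {N : ℕ} (z : EuclideanSpace ℝ (Fin N)) (c d : ℝ)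
    (y : EuclideanSpace ℝ (Fin N)) :
    HasFDerivAt (fun w : EuclideanSpace ℝ (Fin N) => c * ‖w - z‖ ^ 2 + d)
      ((2 * c) • (innerSL ℝ (y - z) : EuclideanSpace ℝ (Fin N) →L[ℝ] ℝ)) y := by
  have h1 : HasFDerivAt (fun w : EuclideanSpace ℝ (Fin N) => w - z)
      (ContinuousLinearMap.id ℝ (EuclideanSpace ℝ (Fin N))) y :=
    (hasFDerivAt_id y).sub_const z
  have h3 := (h1.norm_sq.const_mul c).add_const d
  refine h3.congr_fderiv ?_
  ext w
  simp [two_smul]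
  ring

private lemma innerH {N : ℕ} (z e : EuclideanSpace ℝ (Fin N)) (c : ℝ)
    (y : EuclideanSpace ℝ (Fin N)) :
    HasFDerivAt (fun w : EuclideanSpace ℝ (Fin N) => c * (2 * (inner ℝ (w - z) e : ℝ)))
      (c • ((2:ℝ) • (innerSL ℝ e : EuclideanSpace ℝ (Fin N) →L[ℝ] ℝ))) y := by
  have hbase : HasFDerivAt (fun w : EuclideanSpace ℝ (Fin N) => (inner ℝ (w - z) e : ℝ))
      (innerSL ℝ e : EuclideanSpace ℝ (Fin N) →L[ℝ] ℝ) y := by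
    have heq : (fun w : EuclideanSpace ℝ (Fin N) => (inner ℝ (w - z) e : ℝ)) =
        fun w => (innerSL ℝ e : EuclideanSpace ℝ (Fin N) →L[ℝ] ℝ) w - (inner ℝ z e : ℝ) := by
      funext w
      simp only [innerSL_apply_apply]
      rw [inner_sub_left, real_inner_comm w e]
    rw [heq]
    simpa using ((innerSL ℝ e : EuclideanSpace ℝ (Fin N) →L[ℝ] ℝ).hasFDerivAt (x := y)).sub_const
      ((inner ℝ z e : ℝ))
  exact (hbase.const_mul 2).const_mul c

variable {N : ℕ} {Ω : Set (EuclideanSpace ℝ (Fin N))} {u : EuclideanSpace ℝ (Fin N) → ℝ}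

private lemma uD_diff (hΩo : IsOpen Ω) (hu2 : ContDiffOn ℝ 2 u Ω)
    {x : EuclideanSpace ℝ (Fin N)} (hx : x ∈ Ω) (e : EuclideanSpace ℝ (Fin N)) :
    DifferentiableAt ℝ (fun w => fderiv ℝ u w e) x := by
  have hcd : ContDiffAt ℝ 2 u x := (hu2 x hx).contDiffAt (hΩo.mem_nhds hx)
  have h1 : ContDiffAt ℝ 1 (fderiv ℝ u) x := hcd.fderiv_right (by norm_num)
  exact (h1.clm_apply contDiffAt_const).differentiableAt one_ne_zero

private lemma pert_diff (hΩo : IsOpen Ω) (hu2 : ContDiffOn ℝ 2 u Ω)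
    {y : EuclideanSpace ℝ (Fin N)} (hy : y ∈ Ω) (z : EuclideanSpace ℝ (Fin N)) (c d : ℝ) :
    DifferentiableAt ℝ (fun w => u w + (c * ‖w - z‖ ^ 2 + d)) y :=
  (((hu2 y hy).contDiffAt (hΩo.mem_nhds hy)).differentiableAt (by norm_num)).add
    (quadH z c d y).differentiableAt

private lemma pert_ev (hΩo : IsOpen Ω) (hu2 : ContDiffOn ℝ 2 u Ω)
    {x : EuclideanSpace ℝ (Fin N)} (hx : x ∈ Ω) (z : EuclideanSpace ℝ (Fin N)) (c d : ℝ)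
    (e : EuclideanSpace ℝ (Fin N)) :
    (fun w => fderiv ℝ (fun w' => u w' + (c * ‖w' - z‖ ^ 2 + d)) w e)
      =ᶠ[𝓝 x] fun w => fderiv ℝ u w e + c * (2 * (inner ℝ (w - z) e : ℝ)) := by
  filter_upwards [hΩo.mem_nhds hx] with w hw
  have hu' : DifferentiableAt ℝ u w :=
    ((hu2 w hw).contDiffAt (hΩo.mem_nhds hw)).differentiableAt (by norm_num)
  have hq := quadH z c d w
  rw [fderiv_fun_add hu' hq.differentiableAt, hq.fderiv]
  simp only [ContinuousLinearMap.add_apply, ContinuousLinearMap.coe_smul', Pi.smul_apply,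
    innerSL_apply_apply, smul_eq_mul]
  ring

private lemma pert_fdiff (hΩo : IsOpen Ω) (hu2 : ContDiffOn ℝ 2 u Ω)
    {x : EuclideanSpace ℝ (Fin N)} (hx : x ∈ Ω) (z : EuclideanSpace ℝ (Fin N)) (c d : ℝ)
    (e : EuclideanSpace ℝ (Fin N)) :
    DifferentiableAt ℝ (fun w => fderiv ℝ (fun w' => u w' + (c * ‖w' - z‖ ^ 2 + d)) w e) x := by
  refine (pert_ev hΩo hu2 hx z c d e).differentiableAt_iff.mpr ?_
  exact (uD_diff hΩo hu2 hx e).add (innerH z e c x).differentiableAt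

private lemma pert_lap (hΩo : IsOpen Ω) (hu2 : ContDiffOn ℝ 2 u Ω)
    {x : EuclideanSpace ℝ (Fin N)} (hx : x ∈ Ω) (hlapu : lap u x = N)
    (z : EuclideanSpace ℝ (Fin N)) (c d : ℝ) :
    lap (fun w => u w + (c * ‖w - z‖ ^ 2 + d)) x = N + 2 * c * N := by
  have hterm : ∀ i : Fin N,
      fderiv ℝ (fun w => fderiv ℝ (fun w' => u w' + (c * ‖w' - z‖ ^ 2 + d)) w
        (EuclideanSpace.single i (1:ℝ))) x (EuclideanSpace.single i (1:ℝ)) =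
      fderiv ℝ (fun w => fderiv ℝ u w (EuclideanSpace.single i (1:ℝ))) x
        (EuclideanSpace.single i (1:ℝ)) + 2 * c := by
    intro i
    set e := EuclideanSpace.single i (1:ℝ) with he
    rw [(pert_ev hΩo hu2 hx z c d e).fderiv_eq]
    rw [fderiv_fun_add (uD_diff hΩo hu2 hx e) (innerH z e c x).differentiableAt]
    rw [ContinuousLinearMap.add_apply, (innerH z e c x).fderiv]
    have hinner : (inner ℝ e e : ℝ) = 1 := by
      rw [he]
      simp [EuclideanSpace.inner_single_left, EuclideanSpace.single_apply]
    simp only [ContinuousLinearMap.coe_smul', Pi.smul_apply, innerSL_apply_apply, smul_eq_mul, hinner]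
    ring
  unfold lap
  rw [Finset.sum_congr rfl (fun i _ => hterm i), Finset.sum_add_distrib]
  have : lap u x = N := hlapu
  unfold lap at this
  rw [this]
  simp [Finset.card_univ]
  ring


private lemma u_nonpos (hN : 2 ≤ N) (hΩo : IsOpen Ω) (hΩb : IsBounded Ω)
    (hne : Ω.Nonempty) (hu2 : ContDiffOn ℝ 2 u Ω) (hlapu : ∀ x ∈ Ω, lap u x = (N:ℝ))
    (hucont : ContinuousOn u (closure Ω)) (hubd : ∀ x ∈ frontier Ω, u x = 0) :
    ∀ x ∈ closure Ω, u x ≤ 0 := by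
  obtain ⟨R, hR⟩ := hΩb.subset_closedBall 0
  obtain ⟨p, hp⟩ := id hne
  have hR0 : (0:ℝ) ≤ R := le_trans dist_nonneg (mem_closedBall.mp (hR hp))
  have hclsub : closure Ω ⊆ closedBall 0 R := closure_minimal hR isClosed_closedBall
  have hN' : (2:ℝ) ≤ (N:ℝ) := by exact_mod_cast hN
  intro x hx
  have key : ∀ ε : ℝ, 0 < ε → u x ≤ 0 + ε * R ^ 2 := by
    intro ε hε
    have hvle : ∀ w ∈ closure Ω,
        u w + (ε * ‖w - 0‖ ^ 2 + (-(ε * R ^ 2))) ≤ 0 := by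
      apply maxprin hΩo hΩb hne
      · exact hucont.add (Continuous.continuousOn (by fun_prop))
      · exact fun y hy => pert_diff hΩo hu2 hy 0 ε (-(ε * R ^ 2))
      · exact fun y hy i => pert_fdiff hΩo hu2 hy 0 ε (-(ε * R ^ 2)) _
      · intro y hy
        rw [pert_lap hΩo hu2 hy (hlapu y hy) 0 ε (-(ε * R ^ 2))]
        nlinarith
      · intro y hyf
        have hycl : y ∈ closure Ω := frontier_subset_closure hyf
        have hyR : ‖y - 0‖ ≤ R := by
          have := hclsub hycl
          simpa [dist_eq_norm] using this
        rw [hubd y hyf]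
        have h0 : (0:ℝ) ≤ ‖y - 0‖ := norm_nonneg _
        have hsq : ‖y - 0‖ ^ 2 ≤ R ^ 2 := by nlinarith
        nlinarith [mul_le_mul_of_nonneg_left hsq hε.le]
    have := hvle x hx
    have h0 : (0:ℝ) ≤ ‖x - 0‖ ^ 2 := by positivity
    nlinarith
  exact aux_eps (by positivity) key

end torsionAux

theorem stmt5 {N : ℕ} (hN : 2 ≤ N) (Ω : Set (EuclideanSpace ℝ (Fin N)))
    (hΩo : IsOpen Ω) (hΩb : IsBounded Ω) (hΩc : IsConnected Ω)
    (u : EuclideanSpace ℝ (Fin N) → ℝ) (hu : torsion Ω u) :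
    ∀ x ∈ closure Ω, -(u x) ≥ (1 / 2) * infDist x (frontier Ω) ^ 2 := by
  intro x hx
  have hne : Ω.Nonempty := hΩc.nonempty
  have hA := u_nonpos hN hΩo hΩb hne hu.1 hu.2.1 hu.2.2.1 hu.2.2.2
  by_cases hxΩ : x ∈ Ω
  · set δ := infDist x (frontier Ω) with hδdef
    have hδ0 : 0 ≤ δ := infDist_nonneg
    rcases eq_or_lt_of_le hδ0 with hδz | hδpos
    · have h := hA x hx
      rw [← hδz]
      norm_num
      linarith
    · have hΩne_univ : Ω ≠ univ := by
        intro hU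
        obtain ⟨R, hR⟩ := hΩb.subset_closedBall 0
        have hball2 : ∀ w : EuclideanSpace ℝ (Fin N), w ∈ closedBall (0:EuclideanSpace ℝ (Fin N)) R := by
          intro w; exact hR (hU ▸ mem_univ w)
        have hR0 : (0:ℝ) ≤ R := le_trans dist_nonneg (mem_closedBall.mp (hball2 0))
        have hi0 : (0:ℕ) < N := by omega
        have hfar := hball2 (EuclideanSpace.single (⟨0, hi0⟩ : Fin N) (R + 1))
        rw [mem_closedBall, dist_zero_right, EuclideanSpace.norm_single] at hfar
        rw [Real.norm_eq_abs, abs_of_pos (by linarith)] at hfar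
        linarith
      have hballΩ : ball x δ ⊆ Ω := by
        intro y hy
        by_contra hyn
        obtain ⟨p, hpf, hpd⟩ := exists_mem_frontier_infDist_compl_eq_dist hxΩ hΩne_univ
        have h1 : δ ≤ dist x p := infDist_le_dist_of_mem hpf
        have h2 : infDist x Ωᶜ ≤ dist x y := infDist_le_dist_of_mem hyn
        rw [← hpd] at h1
        have h3 : dist x y < δ := by rw [dist_comm]; exact mem_ball.mp hy
        linarith
      have hδne : δ ≠ 0 := ne_of_gt hδpos
      have hclball : closure (ball x δ) = closedBall x δ := closure_ball x hδne
      have hsub : closure (ball x δ) ⊆ closure Ω := closure_mono hballΩ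
      have hN' : (2:ℝ) ≤ (N:ℝ) := by exact_mod_cast hN
      have key : ∀ ε : ℝ, 0 < ε → (1/2) * δ ^ 2 ≤ -(u x) + ε * δ ^ 2 := by
        intro ε hε
        have hvle : ∀ w ∈ closure (ball x δ),
            u w + ((ε - 1/2) * ‖w - x‖ ^ 2 + (1/2 - ε) * δ ^ 2) ≤ 0 := by
          apply maxprin isOpen_ball isBounded_ball ⟨x, mem_ball_self hδpos⟩
          · exact (hu.2.2.1.mono hsub).add (Continuous.continuousOn (by fun_prop))
          · exact fun y hy => pert_diff hΩo hu.1 (hballΩ hy) x (ε - 1/2) ((1/2 - ε) * δ ^ 2)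
          · exact fun y hy i => pert_fdiff hΩo hu.1 (hballΩ hy) x (ε - 1/2) ((1/2 - ε) * δ ^ 2) _
          · intro y hy
            rw [pert_lap hΩo hu.1 (hballΩ hy) (hu.2.1 y (hballΩ hy)) x (ε - 1/2)
              ((1/2 - ε) * δ ^ 2)]
            nlinarith
          · intro y hyf
            rw [frontier_ball x hδne] at hyf
            have hyd : ‖y - x‖ = δ := by
              have := mem_sphere.mp hyf
              rwa [dist_eq_norm] at this
            have hycl : y ∈ closure Ω := hsub (by
              rw [hclball]; exact sphere_subset_closedBall hyf)
            have hy0 : u y ≤ 0 := hA y hycl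
            rw [hyd]
            nlinarith
        have hx0 := hvle x (subset_closure (mem_ball_self hδpos))
        rw [sub_self, norm_zero] at hx0
        nlinarith
      have := aux_eps (a := (1/2) * δ ^ 2) (b := -(u x)) (K := δ ^ 2) (by positivity) key
      exact this
  · have hxf : x ∈ frontier Ω := by
      rw [frontier, hΩo.interior_eq]
      exact ⟨hx, hxΩ⟩
    rw [hu.2.2.2 x hxf, infDist_zero_of_mem hxf]
    norm_num

end
end

section
/- Let Ω ⊂ ℝ^N (N ≥ 2) be a bounded domain with boundary Γ of class C², and let u be the solution of the torsion problem. Then −u(x) ≥ (r_i/2)·δ_Γ(x) for every x ∈ Ω̄, where r_i is the radius of the uniform interior sphere condition of Ω. -/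
open MeasureTheory Metric Set Bornology
open scoped RealInnerProductSpace NNReal ENNReal

noncomputable section

section AuxTorsion

open Filter

variable {N : ℕ}

private lemma aux_1d' {g : ℝ → ℝ} {d : ℝ} (hd : 0 < d)
    (hgd : ∀ᶠ t in nhds (0:ℝ), DifferentiableAt ℝ g t)
    (hG : HasDerivAt (deriv g) d 0)
    (hg0 : deriv g 0 = 0)
    (hmax : IsLocalMax g 0) : False := by
  have hs : Tendsto (slope (deriv g) 0) (nhdsWithin 0 {(0:ℝ)}ᶜ) (nhds d) :=
    hasDerivAt_iff_tendsto_slope.mp hG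
  have h1 : ∀ᶠ t in nhdsWithin 0 {(0:ℝ)}ᶜ, 0 < slope (deriv g) 0 t :=
    hs.eventually (eventually_gt_nhds hd)
  have h1' : ∀ᶠ t in nhdsWithin (0:ℝ) (Ioi 0), 0 < deriv g t := by
    have := h1.filter_mono (nhdsWithin_mono 0 (fun t ht => ne_of_gt ht))
    filter_upwards [this, self_mem_nhdsWithin] with t ht (ht' : t ∈ Ioi 0)
    have hsl : slope (deriv g) 0 t = deriv g t / t := by
      rw [slope_def_field, hg0, sub_zero, sub_zero]
    rw [hsl] at ht
    have := mul_pos ht ht'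
    rwa [div_mul_cancel₀] at this
    exact ne_of_gt ht'
  obtain ⟨b, hb, hball⟩ := mem_nhdsGT_iff_exists_Ioo_subset.mp h1'
  rw [mem_Ioi] at hb
  obtain ⟨ε, εpos, hε⟩ := Metric.eventually_nhds_iff.mp (hmax.and hgd)
  set η := min (ε/2) (b/2) with hη
  have ηpos : 0 < η := lt_min (by linarith) (by linarith)
  have hmono : StrictMonoOn g (Icc 0 η) := by
    apply strictMonoOn_of_deriv_pos (convex_Icc _ _)
    · intro t ht
      have : dist t 0 < ε := by
        simp only [Real.dist_eq, sub_zero]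
        rw [abs_of_nonneg ht.1]
        calc t ≤ η := ht.2
        _ ≤ ε/2 := min_le_left _ _
        _ < ε := by linarith
      exact ((hε this).2).continuousAt.continuousWithinAt
    · intro t ht
      rw [interior_Icc] at ht
      apply hball
      refine ⟨ht.1, ?_⟩
      calc t < η := ht.2
      _ ≤ b/2 := min_le_right _ _
      _ < b := by linarith
  have h2 : g 0 < g η := hmono ⟨le_rfl, le_of_lt ηpos⟩ ⟨le_of_lt ηpos, le_rfl⟩ ηpos
  have h3 : g η ≤ g 0 := by
    refine (hε ?_).1
    simp only [Real.dist_eq, sub_zero]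
    rw [abs_of_pos ηpos]
    calc η ≤ ε/2 := min_le_left _ _
    _ < ε := by linarith
  linarith

private lemma dir2_nonpos' {E : Type*} [NormedAddCommGroup E] [NormedSpace ℝ E]
    {w : E → ℝ} {O : Set E} (hO : IsOpen O) {x₀ : E} (hx₀ : x₀ ∈ O)
    (hw : ContDiffOn ℝ 2 w O) (hmax : IsLocalMax w x₀) (v : E) :
    fderiv ℝ (fun y => fderiv ℝ w y v) x₀ v ≤ 0 := by
  by_contra hcon
  push_neg at hcon
  set c : ℝ → E := fun t => x₀ + t • v with hcdef
  have hc0 : c 0 = x₀ := by simp [hcdef]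
  have hder_c : ∀ t : ℝ, HasDerivAt c v t := by
    intro t
    exact (((hasDerivAt_id t).smul_const v).const_add x₀).congr_deriv (one_smul ℝ v)
  have hc_cont : Continuous c := by continuity
  have hmemO : ∀ᶠ t in nhds (0:ℝ), c t ∈ O := by
    have : Tendsto c (nhds 0) (nhds x₀) := by
      rw [← hc0]; exact hc_cont.continuousAt
    exact this.eventually (hO.eventually_mem hx₀)
  have hwd : DifferentiableOn ℝ w O := hw.differentiableOn (by norm_num)
  have hwd' : ContDiffOn ℝ 1 (fun y => fderiv ℝ w y) O :=
    hw.fderiv_of_isOpen hO (by norm_num)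
  have hFd : DifferentiableAt ℝ (fun y => fderiv ℝ w y) x₀ :=
    ((hwd'.differentiableOn (by norm_num)) x₀ hx₀).differentiableAt (hO.mem_nhds hx₀)
  set F : E → ℝ := fun y => fderiv ℝ w y v with hFdef
  have hFat : DifferentiableAt ℝ F x₀ := by
    exact (ContinuousLinearMap.apply ℝ ℝ v).differentiableAt.comp x₀ hFd
  set g : ℝ → ℝ := fun t => w (c t) with hgdef
  have hg_ev : ∀ᶠ t in nhds (0:ℝ), HasDerivAt g (F (c t)) t := by
    filter_upwards [hmemO] with t ht
    have hwt : DifferentiableAt ℝ w (c t) :=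
      ((hwd (c t) ht).differentiableAt (hO.mem_nhds ht))
    exact hwt.hasFDerivAt.comp_hasDerivAt t (hder_c t)
  have hgd : ∀ᶠ t in nhds (0:ℝ), DifferentiableAt ℝ g t := by
    filter_upwards [hg_ev] with t ht using ht.differentiableAt
  have hderiv_eq : ∀ᶠ t in nhds (0:ℝ), deriv g t = F (c t) := by
    filter_upwards [hg_ev] with t ht using ht.deriv
  have hG0 : HasDerivAt (fun t => F (c t)) (fderiv ℝ F x₀ v) 0 := by
    have hFat' : HasFDerivAt F (fderiv ℝ F x₀) (c 0) := by rw [hc0]; exact hFat.hasFDerivAt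
    exact hFat'.comp_hasDerivAt 0 (hder_c 0)
  have hG : HasDerivAt (deriv g) (fderiv ℝ F x₀ v) 0 :=
    hG0.congr_of_eventuallyEq hderiv_eq
  have hg0 : deriv g 0 = 0 := by
    have h00 : deriv g 0 = F (c 0) := hderiv_eq.self_of_nhds
    rw [h00, hc0, hFdef]
    have : fderiv ℝ w x₀ = 0 := hmax.fderiv_eq_zero
    simp [this]
  have hgmax : IsLocalMax g 0 := by
    have htc : Tendsto c (nhds 0) (nhds x₀) := by
      rw [← hc0]; exact hc_cont.continuousAt
    have := htc.eventually hmax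
    unfold IsLocalMax IsMaxFilter
    simpa [hgdef, hc0] using this
  exact aux_1d' hcon hgd hG hg0 hgmax

private lemma contDiff_qf' (z : EuclideanSpace ℝ (Fin N)) (a : ℝ) : ContDiff ℝ 2 (qf z a) := by
  unfold qf
  exact (((contDiff_id.sub contDiff_const).norm_sq (𝕜 := ℝ)).sub contDiff_const).div_const 2

private lemma hasFDerivAt_qf' (z : EuclideanSpace ℝ (Fin N)) (a : ℝ) (y : EuclideanSpace ℝ (Fin N)) :
    HasFDerivAt (qf z a) (innerSL ℝ (y - z)) y := by
  have h1 : HasFDerivAt (fun y : EuclideanSpace ℝ (Fin N) => y - z) (ContinuousLinearMap.id ℝ _) y := by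
    simpa using (hasFDerivAt_id y).sub_const z
  have h2 := h1.norm_sq
  have h3 := (h2.sub_const a).const_smul (2⁻¹ : ℝ)
  have hq : qf z a = fun x => (2⁻¹:ℝ) • (‖x - z‖^2 - a) := by
    funext x; simp only [qf, smul_eq_mul]; ring
  rw [hq]
  refine HasFDerivAt.congr_fderiv h3 ?_
  ext w
  simp [two_smul]
  ring

private lemma fderiv_qf_apply' (z : EuclideanSpace ℝ (Fin N)) (a : ℝ) (y : EuclideanSpace ℝ (Fin N))
    (v : EuclideanSpace ℝ (Fin N)) :
    fderiv ℝ (qf z a) y v = ⟪y - z, v⟫ := by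
  rw [(hasFDerivAt_qf' z a y).fderiv]; rfl

private lemma lap_qf' (z : EuclideanSpace ℝ (Fin N)) (a : ℝ) (x : EuclideanSpace ℝ (Fin N)) :
    lap (qf z a) x = N := by
  unfold lap
  have : ∀ i : Fin N,
      fderiv ℝ (fun y => fderiv ℝ (qf z a) y (EuclideanSpace.single i 1)) x
        (EuclideanSpace.single i 1) = 1 := by
    intro i
    have hEq : (fun y => fderiv ℝ (qf z a) y (EuclideanSpace.single i 1)) =
        fun y => (innerSL ℝ (EuclideanSpace.single i (1:ℝ))) y - ⟪z, EuclideanSpace.single i (1:ℝ)⟫ := by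
      funext y
      rw [fderiv_qf_apply']
      simp [inner_sub_left, real_inner_comm]
    rw [hEq]
    have hd : HasFDerivAt
        (fun y : EuclideanSpace ℝ (Fin N) => (innerSL ℝ (EuclideanSpace.single i (1:ℝ))) y - ⟪z, EuclideanSpace.single i (1:ℝ)⟫)
        (innerSL ℝ (EuclideanSpace.single i (1:ℝ))) x :=
      ((innerSL ℝ (EuclideanSpace.single i (1:ℝ))).hasFDerivAt).sub_const _
    rw [hd.fderiv]
    show ⟪EuclideanSpace.single i (1:ℝ), EuclideanSpace.single i (1:ℝ)⟫ = 1
    simp [EuclideanSpace.inner_single_left, EuclideanSpace.single_apply]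
  rw [Finset.sum_congr rfl (fun i _ => this i)]
  simp

private lemma lap_sub_mul' {O : Set (EuclideanSpace ℝ (Fin N))} (hO : IsOpen O)
    {x : EuclideanSpace ℝ (Fin N)} (hx : x ∈ O)
    {u q : EuclideanSpace ℝ (Fin N) → ℝ} (hu : ContDiffOn ℝ 2 u O) (hq : ContDiff ℝ 2 q)
    (b : ℝ) :
    lap (fun y => u y - b * q y) x = lap u x - b * lap q x := by
  have hud : ∀ y ∈ O, DifferentiableAt ℝ u y := fun y hy =>
    ((hu.differentiableOn (by norm_num)) y hy).differentiableAt (hO.mem_nhds hy)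
  have hqd : ∀ y, DifferentiableAt ℝ q y := fun y => hq.differentiable (by norm_num) y
  unfold lap
  rw [Finset.mul_sum, ← Finset.sum_sub_distrib]
  apply Finset.sum_congr rfl
  intro i _
  set v := EuclideanSpace.single i (1:ℝ) with hv
  have ev : (fun y => fderiv ℝ (fun y => u y - b * q y) y v) =ᶠ[nhds x]
      (fun y => fderiv ℝ u y v - b * fderiv ℝ q y v) := by
    filter_upwards [hO.mem_nhds hx] with y hy
    rw [fderiv_fun_sub (hud y hy) ((hqd y).const_mul b), fderiv_const_mul (hqd y)]
    simp
  have hDu : DifferentiableAt ℝ (fun y => fderiv ℝ u y v) x := by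
    have h1 : DifferentiableAt ℝ (fun y => fderiv ℝ u y) x :=
      (((hu.fderiv_of_isOpen (m := 1) hO (by norm_num)).differentiableOn (by norm_num)) x hx).differentiableAt
        (hO.mem_nhds hx)
    exact (ContinuousLinearMap.apply ℝ ℝ v).differentiableAt.comp x h1
  have hDq : DifferentiableAt ℝ (fun y => fderiv ℝ q y v) x := by
    have h1 : DifferentiableAt ℝ (fun y => fderiv ℝ q y) x :=
      (hq.fderiv_right (m := 1) (by norm_num)).differentiable (by norm_num) x
    exact (ContinuousLinearMap.apply ℝ ℝ v).differentiableAt.comp x h1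
  rw [ev.fderiv_eq, fderiv_fun_sub hDu ((hDq).const_mul b), fderiv_const_mul hDq]
  simp

private lemma inner_gradient' (f : EuclideanSpace ℝ (Fin N) → ℝ) (p v : EuclideanSpace ℝ (Fin N)) :
    ⟪gradient f p, v⟫ = fderiv ℝ f p v := by
  simp [gradient, ← InnerProductSpace.toDual_apply_apply]

private lemma normal_dir' {Ω : Set (EuclideanSpace ℝ (Fin N))}
    {U : Set (EuclideanSpace ℝ (Fin N))} {f : EuclideanSpace ℝ (Fin N) → ℝ}
    {p : EuclideanSpace ℝ (Fin N)} (hU : IsOpen U) (hpU : p ∈ U)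
    (hf : DifferentiableAt ℝ f p) (hfneg : ∀ y ∈ U, (y ∈ Ω ↔ f y < 0)) (hfp : f p = 0)
    (hg : gradient f p ≠ 0) {z : EuclideanSpace ℝ (Fin N)} {ρ : ℝ} (hρ : 0 < ρ)
    (hball : ball z ρ ⊆ Ω) (hdist : dist p z = ρ) :
    ρ⁻¹ • (z - p) = -(‖gradient f p‖⁻¹ • gradient f p) := by
  set g := gradient f p with hgdef
  have key : ∀ v : EuclideanSpace ℝ (Fin N), 0 < ⟪v, z - p⟫ → ⟪g, v⟫ ≤ 0 := by
    intro v hv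
    rw [hgdef, inner_gradient']
    set φ : ℝ → ℝ := fun t => f (p + t • v) with hφdef
    have hline : ∀ t : ℝ, HasDerivAt (fun s : ℝ => p + s • v) v t := by
      intro t
      simpa using ((hasDerivAt_id t).smul_const v).const_add p
    have hlc : Continuous (fun s : ℝ => p + s • v) := by continuity
    have hφ : HasDerivAt φ (fderiv ℝ f p v) 0 := by
      have h0 : HasFDerivAt f (fderiv ℝ f p) ((fun s : ℝ => p + s • v) 0) := by
        simpa using hf.hasFDerivAt
      exact h0.comp_hasDerivAt 0 (hline 0)
    have hvn : (0:ℝ) < ‖v‖ := by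
      rcases eq_or_ne v 0 with h | h
      · rw [h] at hv; simp at hv
      · exact norm_pos_iff.mpr h
    set t₀ : ℝ := 2 * ⟪v, z - p⟫ / ‖v‖ ^ 2 with ht₀
    have ht₀pos : 0 < t₀ := by positivity
    have hUmem : ∀ᶠ t in nhds (0:ℝ), p + t • v ∈ U := by
      have : Tendsto (fun s : ℝ => p + s • v) (nhds 0) (nhds p) := by
        have := hlc.tendsto (0:ℝ)
        simpa using this
      exact this.eventually (hU.eventually_mem hpU)
    have hneg : ∀ᶠ t in nhdsWithin (0:ℝ) (Ioi 0), φ t < 0 := by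
      obtain ⟨ε, εpos, hε⟩ := Metric.eventually_nhds_iff.mp hUmem
      have hmem : Ioo (0:ℝ) (min ε t₀) ∈ nhdsWithin (0:ℝ) (Ioi 0) :=
        Ioo_mem_nhdsGT_of_mem ⟨le_rfl, lt_min εpos ht₀pos⟩
      filter_upwards [hmem] with t ht
      have htpos : 0 < t := ht.1
      have htε : t < ε := lt_of_lt_of_le (lt_min_iff.mp ht.2).1 le_rfl
      have htt₀ : t < t₀ := (lt_min_iff.mp ht.2).2
      have hU' : p + t • v ∈ U := by
        apply hε
        simp only [dist_eq_norm]
        simpa [abs_of_pos htpos] using htε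
      have hballmem : p + t • v ∈ ball z ρ := by
        rw [mem_ball, dist_eq_norm]
        have hexp : ‖p + t • v - z‖ ^ 2 = ρ ^ 2 - 2 * t * ⟪v, z - p⟫ + t ^ 2 * ‖v‖ ^ 2 := by
          have : p + t • v - z = (p - z) + t • v := by abel
          rw [this, norm_add_sq_real]
          have h1 : ‖p - z‖ = ρ := by rw [← hdist, dist_eq_norm]
          have h2 : ⟪p - z, t • v⟫ = - (t * ⟪v, z - p⟫) := by
            rw [real_inner_smul_right, real_inner_comm]
            have : ⟪v, p - z⟫ = -⟪v, z - p⟫ := by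
              rw [← inner_neg_right]; congr 1; abel
            rw [this]; ring
          rw [h1, h2, norm_smul]
          simp [abs_of_pos htpos]
          ring
        have hlt : ‖p + t • v - z‖ ^ 2 < ρ ^ 2 := by
          rw [hexp]
          have : t * ‖v‖ ^ 2 < 2 * ⟪v, z - p⟫ := by
            rw [ht₀] at htt₀
            calc t * ‖v‖ ^ 2 < t₀ * ‖v‖ ^ 2 := by
                  apply mul_lt_mul_of_pos_right htt₀ (by positivity)
            _ = 2 * ⟪v, z - p⟫ := by
                  rw [ht₀, div_mul_cancel₀ _ (by positivity : ‖v‖ ^ 2 ≠ 0)]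
          nlinarith
        exact lt_of_pow_lt_pow_left₀ 2 (le_of_lt hρ) hlt
      have : p + t • v ∈ Ω := hball hballmem
      exact (hfneg _ hU').mp this
    have hs : Tendsto (slope φ 0) (nhdsWithin 0 {(0:ℝ)}ᶜ) (nhds (fderiv ℝ f p v)) :=
      hasDerivAt_iff_tendsto_slope.mp hφ
    have hs' : Tendsto (slope φ 0) (nhdsWithin (0:ℝ) (Ioi 0)) (nhds (fderiv ℝ f p v)) :=
      hs.mono_left (nhdsWithin_mono 0 (fun t ht => ne_of_gt ht))
    refine le_of_tendsto hs' ?_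
    filter_upwards [hneg, self_mem_nhdsWithin] with t ht (ht' : t ∈ Ioi 0)
    have hφ0 : φ 0 = 0 := by simpa [hφdef] using hfp
    rw [slope_def_field, hφ0, sub_zero, sub_zero]
    exact le_of_lt (div_neg_of_neg_of_pos ht ht')
  set n : EuclideanSpace ℝ (Fin N) := ρ⁻¹ • (z - p) with hn
  have hzp : z - p = ρ • n := by
    rw [hn, smul_smul, mul_inv_cancel₀ (ne_of_gt hρ), one_smul]
  have hnorm_n : ‖n‖ = 1 := by
    rw [hn, norm_smul, Real.norm_eq_abs]
    have : ‖z - p‖ = ρ := by rw [← hdist, dist_eq_norm]; rw [norm_sub_rev]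
    rw [this, abs_of_pos (inv_pos.mpr hρ), inv_mul_cancel₀ (ne_of_gt hρ)]
  have hnn : ⟪n, n⟫ = 1 := by
    rw [real_inner_self_eq_norm_sq, hnorm_n]; norm_num
  set a : ℝ := ⟪g, n⟫ with ha
  set gp : EuclideanSpace ℝ (Fin N) := g - a • n with hgp
  have hgpn : ⟪gp, n⟫ = 0 := by
    rw [hgp, inner_sub_left, real_inner_smul_left, hnn]
    simp [ha]
  have hkey2 : ∀ s : ℝ, 0 < s → ‖gp‖ ^ 2 + s * a ≤ 0 := by
    intro s hs
    have h1 : 0 < ⟪gp + s • n, z - p⟫ := by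
      rw [hzp, real_inner_smul_right, inner_add_left, real_inner_smul_left, hgpn, hnn]
      simp only [zero_add, mul_one]
      positivity
    have h2 := key _ h1
    calc ‖gp‖ ^ 2 + s * a = ⟪g, gp + s • n⟫ := by
          have hggp : ⟪g, gp⟫ = ‖gp‖ ^ 2 := by
            have hgg : g = gp + a • n := by rw [hgp]; abel
            have hngp : ⟪n, gp⟫ = 0 := by rw [real_inner_comm]; exact hgpn
            rw [hgg, inner_add_left, real_inner_smul_left, hngp,
              real_inner_self_eq_norm_sq]
            ring
          rw [inner_add_right, real_inner_smul_right, hggp, ← ha]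
      _ ≤ 0 := h2
  have hgp0 : gp = 0 := by
    have htend : Tendsto (fun s : ℝ => -(s * a)) (nhdsWithin (0:ℝ) (Ioi 0)) (nhds (0:ℝ)) := by
      have h0 : Tendsto (fun s : ℝ => -(s * a)) (nhds (0:ℝ)) (nhds (-(0 * a))) :=
        ((continuous_id.mul continuous_const).neg).tendsto 0
      simpa using h0.mono_left nhdsWithin_le_nhds
    have hsq : ‖gp‖ ^ 2 ≤ 0 := by
      refine ge_of_tendsto htend ?_
      filter_upwards [self_mem_nhdsWithin] with s (hs : s ∈ Ioi 0)
      have := hkey2 s hs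
      linarith
    have : ‖gp‖ = 0 := by nlinarith [norm_nonneg gp]
    exact norm_eq_zero.mp this
  have hga : g = a • n := by
    have h := hgp0
    rw [hgp, sub_eq_zero] at h
    exact h
  have haneg : a < 0 := by
    have h1 : 0 < ⟪n, z - p⟫ := by
      rw [hzp, real_inner_smul_right, hnn]; simpa using hρ
    have h2 := key n h1
    rcases lt_or_eq_of_le h2 with h | h
    · exact h
    · exfalso; apply hg
      show g = 0
      have ha0 : a = 0 := ha.trans h
      rw [hga, ha0, zero_smul]
  have hnorm_g : ‖g‖ = -a := by
    rw [hga, norm_smul, hnorm_n, Real.norm_eq_abs, abs_of_neg haneg]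
    ring
  show n = -(‖g‖⁻¹ • g)
  rw [hnorm_g, hga, smul_smul]
  have hm : (-a)⁻¹ * a = -1 := by
    rw [inv_neg, neg_mul, inv_mul_cancel₀ (ne_of_lt haneg)]
  rw [hm]
  simp

private lemma maxPrin' {Ω K O' : Set (EuclideanSpace ℝ (Fin N))}
    (hΩo : IsOpen Ω) (hK : IsCompact K)
    {w : EuclideanSpace ℝ (Fin N) → ℝ} (hne : K.Nonempty) (hcont : ContinuousOn w K)
    (hO' : IsOpen O') (hsub : O' ⊆ K) (hOΩ : O' ⊆ Ω)
    (hw2 : ContDiffOn ℝ 2 w Ω) (hlap : ∀ y ∈ O', 0 < lap w y)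
    (hbd : ∀ y ∈ K \ O', w y ≤ 0) :
    ∀ y ∈ K, w y ≤ 0 := by
  obtain ⟨x₀, hx₀K, hmax⟩ := hK.exists_isMaxOn hne hcont
  have hx0le : w x₀ ≤ 0 := by
    by_cases hx₀ : x₀ ∈ O'
    · exfalso
      have hlm : IsLocalMax w x₀ := hmax.isLocalMax (mem_nhds_iff.mpr ⟨O', hsub, hO', hx₀⟩)
      have h1 : lap w x₀ ≤ 0 := by
        unfold lap
        exact Finset.sum_nonpos fun i _ => dir2_nonpos' hΩo (hOΩ hx₀) hw2 hlm _
      exact absurd (hlap x₀ hx₀) (not_lt.mpr h1)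
    · exact hbd x₀ ⟨hx₀K, hx₀⟩
  intro y hy
  exact le_trans (hmax hy) hx0le

private lemma torsion_ball_bound' (hN : 0 < (N:ℝ)) {Ω : Set (EuclideanSpace ℝ (Fin N))}
    (hΩo : IsOpen Ω)
    {u : EuclideanSpace ℝ (Fin N) → ℝ} (hu2 : ContDiffOn ℝ 2 u Ω)
    (hlapu : ∀ x ∈ Ω, lap u x = (N:ℝ))
    (hucont : ContinuousOn u (closure Ω)) (hle : ∀ y ∈ closure Ω, u y ≤ 0)
    {c : EuclideanSpace ℝ (Fin N)} {r : ℝ} (hr : 0 < r) (hball : ball c r ⊆ Ω) :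
    ∀ x ∈ ball c r, u x ≤ qf c (r^2) x := by
  intro x hx
  have hcb : closedBall c r ⊆ closure Ω := by
    calc closedBall c r = closure (ball c r) := (closure_ball c (ne_of_gt hr)).symm
    _ ⊆ closure Ω := closure_mono hball
  have key : ∀ ε : ℝ, 0 < ε → u x ≤ (1 - ε) * qf c (r^2) x := by
    intro ε hε
    set w := fun y => u y - (1 - ε) * qf c (r ^ 2) y with hw
    have hw2 : ContDiffOn ℝ 2 w Ω :=
      hu2.sub ((contDiff_const.mul (contDiff_qf' c (r^2))).contDiffOn)
    have hwcont : ContinuousOn w (closedBall c r) :=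
      (hucont.mono hcb).sub
        ((continuous_const.mul (contDiff_qf' c (r^2)).continuous).continuousOn)
    have hlapw : ∀ y ∈ ball c r, 0 < lap w y := by
      intro y hy
      have hls := lap_sub_mul' hΩo (hball hy) hu2 (contDiff_qf' c (r^2)) (1 - ε)
      rw [hw, hls, hlapu y (hball hy), lap_qf']
      have : (N:ℝ) - (1-ε) * N = ε * N := by ring
      rw [this]
      positivity
    have hbd' : ∀ y ∈ closedBall c r \ ball c r, w y ≤ 0 := by
      intro y hy
      have hyr : dist y c = r := by
        rcases hy with ⟨h1, h2⟩
        rw [mem_closedBall] at h1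
        rw [mem_ball] at h2
        exact le_antisymm h1 (not_lt.mp h2)
      have hq0 : qf c (r^2) y = 0 := by
        simp [qf, ← dist_eq_norm, hyr]
      have hu0 : u y ≤ 0 := hle y (hcb hy.1)
      simp only [hw, hq0]
      linarith
    have hall := maxPrin' hΩo (isCompact_closedBall c r)
      ⟨c, mem_closedBall_self (le_of_lt hr)⟩ hwcont isOpen_ball ball_subset_closedBall
      hball hw2 hlapw hbd'
    have hwx := hall x (ball_subset_closedBall hx)
    simp only [hw] at hwx
    linarith
  have htend : Tendsto (fun ε : ℝ => (1 - ε) * qf c (r^2) x) (nhdsWithin 0 (Ioi 0))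
      (nhds ((1 - 0) * qf c (r^2) x)) :=
    (((continuous_const.sub continuous_id).mul continuous_const).tendsto 0).mono_left
      nhdsWithin_le_nhds
  have := ge_of_tendsto htend (by
    filter_upwards [self_mem_nhdsWithin] with ε (hε : ε ∈ Ioi 0) using key ε hε)
  simpa using this

private lemma ball_infDist_subset' {Ω : Set (EuclideanSpace ℝ (Fin N))} (hΩo : IsOpen Ω)
    {x : EuclideanSpace ℝ (Fin N)} (hx : x ∈ Ω) :
    ball x (infDist x (frontier Ω)) ⊆ Ω := by
  set δ := infDist x (frontier Ω) with hδ
  rcases le_or_gt δ 0 with h | h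
  · rw [ball_eq_empty.mpr h]; exact empty_subset _
  have hsub : ball x δ ⊆ Ω ∪ (closure Ω)ᶜ := by
    intro y hy
    by_cases hyc : y ∈ closure Ω
    · left
      by_contra hyΩ
      have hyf : y ∈ frontier Ω := by
        rw [hΩo.frontier_eq]; exact ⟨hyc, hyΩ⟩
      have h1 : infDist x (frontier Ω) ≤ dist x y := infDist_le_dist_of_mem hyf
      rw [mem_ball, dist_comm] at hy
      rw [← hδ] at h1
      linarith
    · right; exact hyc
  exact (convex_ball x δ).isPreconnected.subset_left_of_subset_union hΩo
    isClosed_closure.isOpen_compl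
    (disjoint_compl_right.mono_left subset_closure) hsub
    ⟨x, mem_ball_self h, hx⟩

end AuxTorsion

theorem stmt6 {N : ℕ} (hN : 2 ≤ N) (Ω : Set (EuclideanSpace ℝ (Fin N)))
    (hΩo : IsOpen Ω) (hΩb : IsBounded Ω) (hΩc : IsConnected Ω)
    (ν : EuclideanSpace ℝ (Fin N) → EuclideanSpace ℝ (Fin N)) (hbd : C2Boundary Ω ν)
    (ri : ℝ) (hri : IntSphere Ω ri)
    (u : EuclideanSpace ℝ (Fin N) → ℝ) (hu : torsion Ω u) :
    ∀ x ∈ closure Ω, -(u x) ≥ (ri / 2) * infDist x (frontier Ω) := by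
  obtain ⟨hu2, hlapu, hucont, hubd⟩ := hu
  obtain ⟨hripos, hsph⟩ := hri
  have hNpos : 0 < (N:ℝ) := by
    have : 0 < N := lt_of_lt_of_le (by norm_num) hN
    exact_mod_cast this
  have hne : Ω.Nonempty := hΩc.nonempty
  -- frontier is nonempty
  have hfrne : (frontier Ω).Nonempty := by
    by_contra h
    rw [Set.not_nonempty_iff_eq_empty] at h
    have hclopen : IsClopen Ω := isClopen_iff_frontier_eq_empty.mpr h
    rcases isClopen_iff.mp hclopen with h1 | h1
    · exact hne.ne_empty h1
    · obtain ⟨C, hC⟩ := isBounded_iff_forall_norm_le.mp hΩb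
      set i0 : Fin N := ⟨0, by omega⟩
      set e : EuclideanSpace ℝ (Fin N) := EuclideanSpace.single i0 (1:ℝ) with he
      have hee : ‖e‖ = 1 := by
        rw [he, EuclideanSpace.norm_single]
        norm_num
      have hmem : (max C 0 + 1) • e ∈ Ω := by rw [h1]; trivial
      have := hC _ hmem
      rw [norm_smul, hee, mul_one, Real.norm_eq_abs,
        abs_of_pos (by positivity : (0:ℝ) < max C 0 + 1)] at this
      have := le_max_left C 0
      linarith
  -- u ≤ 0 on the closure
  have hKcl : IsCompact (closure Ω) :=
    Metric.isCompact_of_isClosed_isBounded isClosed_closure hΩb.closure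
  have hle : ∀ y ∈ closure Ω, u y ≤ 0 := by
    apply maxPrin' hΩo hKcl (hne.mono subset_closure) hucont hΩo subset_closure
      (subset_refl Ω) hu2
    · intro y hy
      rw [hlapu y hy]; exact hNpos
    · intro y hy
      apply le_of_eq
      apply hubd
      rw [hΩo.frontier_eq]
      exact ⟨hy.1, hy.2⟩
  intro x hxcl
  by_cases hxΩ : x ∈ Ω
  swap
  · -- boundary case
    have hxfr : x ∈ frontier Ω := by rw [hΩo.frontier_eq]; exact ⟨hxcl, hxΩ⟩
    rw [hubd x hxfr, infDist_zero_of_mem hxfr]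
    simp
  -- interior case
  set δ := infDist x (frontier Ω) with hδ
  have hfrcl : IsClosed (frontier Ω) := isClosed_frontier
  have hδpos : 0 < δ := by
    rcases lt_or_eq_of_le (infDist_nonneg (s := frontier Ω) (x := x)) with h | h
    · exact h
    · exfalso
      have : x ∈ closure (frontier Ω) := (mem_closure_iff_infDist_zero hfrne).mpr h.symm
      rw [hfrcl.closure_eq] at this
      rw [hΩo.frontier_eq] at this
      exact this.2 hxΩ
  have hballδ : ball x δ ⊆ Ω := ball_infDist_subset' hΩo hxΩ
  rcases le_or_gt ri δ with hcase | hcase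
  · -- deep case : compare on the ball B(x, δ)
    have hux := torsion_ball_bound' hNpos hΩo hu2 hlapu hucont hle hδpos hballδ x
      (mem_ball_self hδpos)
    have hq : qf x (δ^2) x = -δ^2/2 := by simp [qf]
    rw [hq] at hux
    rw [ge_iff_le]
    nlinarith
  · -- shallow case : use the interior tangent ball
    have hfrb : IsBounded (frontier Ω) := hΩb.closure.subset frontier_subset_closure
    have hfrK : IsCompact (frontier Ω) :=
      Metric.isCompact_of_isClosed_isBounded hfrcl hfrb
    obtain ⟨p, hpfr, hpd⟩ := hfrK.exists_infDist_eq_dist hfrne x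
    rw [← hδ] at hpd
    obtain ⟨c, hcball, hctouch⟩ := hsph p hpfr
    have hpc : dist p c = ri := by
      have hpmem : p ∈ closedBall c ri ∩ frontier Ω := by
        rw [hctouch]; exact rfl
      have h1 : dist p c ≤ ri := mem_closedBall.mp hpmem.1
      rcases lt_or_eq_of_le h1 with h | h
      · exfalso
        have : p ∈ Ω := hcball (mem_ball.mpr h)
        rw [hΩo.frontier_eq] at hpfr
        exact hpfr.2 this
      · exact h
    obtain ⟨U, f, hUopen, hpU, hf2, hfiff, hgrad⟩ := hbd p hpfr
    have hgp : gradient f p ≠ 0 := (hgrad p ⟨hpU, hpfr⟩).1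
    have hfdiff : DifferentiableAt ℝ f p :=
      ((hf2.differentiableOn (by norm_num)) p hpU).differentiableAt (hUopen.mem_nhds hpU)
    have hfcont : ContinuousAt f p :=
      (hf2.continuousOn p hpU).continuousAt (hUopen.mem_nhds hpU)
    have hpnΩ : p ∉ Ω := by
      rw [hΩo.frontier_eq] at hpfr; exact hpfr.2
    have hfp0 : f p = 0 := by
      have hge : 0 ≤ f p := by
        by_contra hlt
        push_neg at hlt
        exact hpnΩ ((hfiff p hpU).mpr hlt)
      rcases lt_or_eq_of_le hge with hpos | heq
      · exfalso
        have hev : ∀ᶠ y in nhds p, y ∈ U ∧ 0 < f y :=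
          (hUopen.eventually_mem hpU).and (hfcont.eventually (eventually_gt_nhds hpos))
        have hpcl : p ∈ closure Ω := frontier_subset_closure hpfr
        obtain ⟨y, hy1, hy2⟩ := mem_closure_iff_nhds.mp hpcl _ hev
        exact absurd ((hfiff y hy1.1).mp hy2) (not_lt.mpr (le_of_lt hy1.2))
      · exact heq.symm
    have hdpx : dist p x = δ := by rw [dist_comm]; exact hpd.symm
    have hdx := normal_dir' hUopen hpU hfdiff hfiff hfp0 hgp hδpos hballδ hdpx
    have hdc := normal_dir' hUopen hpU hfdiff hfiff hfp0 hgp hripos hcball hpc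
    have heq : δ⁻¹ • (x - p) = ri⁻¹ • (c - p) := hdx.trans hdc.symm
    set n : EuclideanSpace ℝ (Fin N) := ri⁻¹ • (c - p) with hn
    have hxp : x - p = δ • n := by
      rw [← heq, smul_smul, mul_inv_cancel₀ (ne_of_gt hδpos), one_smul]
    have hcp : c - p = ri • n := by
      rw [hn, smul_smul, mul_inv_cancel₀ (ne_of_gt hripos), one_smul]
    have hxc : x - c = (δ - ri) • n := by
      have h1 : x - c = (x - p) - (c - p) := by abel
      rw [h1, hxp, hcp, sub_smul]
    have hncp : ‖c - p‖ = ri := by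
      rw [← dist_eq_norm, dist_comm]
      exact hpc
    have hnn : ‖n‖ = 1 := by
      rw [hn, norm_smul, Real.norm_eq_abs, abs_of_pos (inv_pos.mpr hripos), hncp,
        inv_mul_cancel₀ (ne_of_gt hripos)]
    have hxcn : ‖x - c‖ = ri - δ := by
      rw [hxc, norm_smul, hnn, mul_one, Real.norm_eq_abs, abs_of_neg (by linarith)]
      ring
    have hxball : x ∈ ball c ri := by
      rw [mem_ball, dist_eq_norm, hxcn]
      linarith
    have hux := torsion_ball_bound' hNpos hΩo hu2 hlapu hucont hle hripos hcball x hxball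
    have hq : qf c (ri^2) x = ((ri - δ)^2 - ri^2)/2 := by
      simp only [qf, hxcn]
    rw [hq] at hux
    rw [ge_iff_le]
    nlinarith


end
end
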